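/- Let H be a complex Hilbert space and T a bounded linear operator on H that is right invertible (TS = 1 for some bounded operator S) but not invertible. Then 0 < m(T*) ≤ dist(T, ℂ𝒱) ≤ ‖T‖, where T* is the adjoint of T. -/

import Mathlib

open scoped ComplexInnerProductSpace

noncomputable section

variable {H : Type*} [NormedAddCommGroup H] [InnerProductSpace ℂ H] [CompleteSpace H]

/-- `T` is `ε`-approximately orthogonality preserving: orthogonal vectors are mapped to
`ε`-orthogonal vectors. -/
def IsAOP (T : H →L[ℂ] H) (ε : ℝ) : Prop :=
  ∀ x y : H, ⟪x, y⟫ = 0 → ‖⟪T x, T y⟫‖ ≤ ε * (‖T x‖ * ‖T y‖)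

/-- `ε̂(T)`, the smallest `ε ∈ [0,1]` for which `T` is `ε`-AOP. -/
def epsHat (T : H →L[ℂ] H) : ℝ :=
  sInf {ε : ℝ | 0 ≤ ε ∧ ε ≤ 1 ∧ IsAOP T ε}

/-- The minimum modulus `m(T) = inf {‖T x‖ : ‖x‖ = 1}`. -/
def minMod (T : H →L[ℂ] H) : ℝ :=
  sInf {r : ℝ | ∃ x : H, ‖x‖ = 1 ∧ ‖T x‖ = r}

/-- The set `ℂ𝒱` of scalar multiples of linear isometries of `H`. -/
def scalarIsoms (H : Type*) [NormedAddCommGroup H] [InnerProductSpace ℂ H] :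
    Set (H →L[ℂ] H) :=
  {S | ∃ (c : ℂ) (V : H →L[ℂ] H), (∀ x : H, ‖V x‖ = ‖x‖) ∧ S = c • V}

/-- `dist(T, ℂ𝒱)`. -/
def distCV (T : H →L[ℂ] H) : ℝ := Metric.infDist T (scalarIsoms H)

/-- The set `𝒱` of linear isometries of `H`. -/
def isoms (H : Type*) [NormedAddCommGroup H] [InnerProductSpace ℂ H] :
    Set (H →L[ℂ] H) :=
  {V | ∀ x : H, ‖V x‖ = ‖x‖}

/-- `dist(T, 𝒱)`. -/
def distV (T : H →L[ℂ] H) : ℝ := Metric.infDist T (isoms H)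

open ContinuousLinearMap in
/-- Eigenvector construction: if `A` has a right inverse `R` of norm `≤ m⁻¹` whose range is
orthogonal to a unit kernel vector `x₀` of `A`, then every `l` with `‖l‖ < m` is an
eigenvalue of `A`. -/
private lemma exists_eigenvector (A R : H →L[ℂ] H) (x₀ : H) (m : ℝ) (hm : 0 < m)
    (hAR : ∀ y, A (R y) = y) (hA0 : A x₀ = 0) (hx₀ : ‖x₀‖ = 1)
    (hRorth : ∀ y, ⟪x₀, R y⟫ = 0) (hRle : ∀ y, ‖R y‖ ≤ m⁻¹ * ‖y‖)
    (l : ℂ) (hl : ‖l‖ < m) : ∃ x : H, x ≠ 0 ∧ A x = l • x := by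
  have hRn : ‖R‖ ≤ m⁻¹ := opNorm_le_bound R (by positivity) fun y => hRle y
  have ht : ‖l • R‖ < 1 := by
    calc ‖l • R‖ = ‖l‖ * ‖R‖ := norm_smul _ _
      _ ≤ ‖l‖ * m⁻¹ := by gcongr
      _ < 1 := by
        rw [← div_eq_mul_inv, div_lt_one hm]; exact hl
  set u := Units.oneSub (l • R) ht with hu
  set x := (↑u⁻¹ : H →L[ℂ] H) x₀ with hx
  have hux : ((1 : H →L[ℂ] H) - l • R) x = x₀ := by
    have h1 : (↑u * ↑u⁻¹ : H →L[ℂ] H) = 1 := u.mul_inv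
    have := congrArg (fun f : H →L[ℂ] H => f x₀) h1
    simpa [hu, Units.val_oneSub, mul_apply, hx] using this
  have hxeq : x = x₀ + l • R x := by
    have : x - l • R x = x₀ := by simpa [sub_apply, smul_apply] using hux
    rw [← this]; abel
  refine ⟨x, ?_, ?_⟩
  · intro h0
    have : ⟪x₀, x⟫ = 1 := by
      rw [hxeq, inner_add_right, inner_smul_right, hRorth,
        @inner_self_eq_norm_sq_to_K ℂ, hx₀]
      simp
    rw [h0, inner_zero_right] at this
    exact one_ne_zero this.symm
  · nth_rewrite 1 [hxeq]
    simp only [map_add, map_smul, hA0, hAR, zero_add]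


open ContinuousLinearMap in
set_option maxHeartbeats 2000000 in
/-- If `T` is right invertible but not invertible, then `0 < m(T*) ≤ dist(T, ℂ𝒱) ≤ ‖T‖`. -/
theorem distCV_right_invertible (T : H →L[ℂ] H)
    (hright : ∃ S : H →L[ℂ] H, T ∘L S = 1) (hninv : ¬ IsUnit T) :
    0 < minMod (ContinuousLinearMap.adjoint T) ∧
      minMod (ContinuousLinearMap.adjoint T) ≤ distCV T ∧ distCV T ≤ ‖T‖ := by
  classical
  obtain ⟨S, hS⟩ := hright
  -- `H` is nontrivial
  have hH : Nontrivial H := by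
    by_contra h
    rw [not_nontrivial_iff_subsingleton] at h
    haveI : Subsingleton (H →L[ℂ] H) :=
      ⟨fun f g => ContinuousLinearMap.ext fun x => Subsingleton.elim _ _⟩
    exact hninv (isUnit_of_subsingleton T)
  -- `T` is surjective
  have hTsurj : Function.Surjective T := fun y =>
    ⟨S y, by simpa [comp_apply] using congrArg (fun f : H →L[ℂ] H => f y) hS⟩
  -- a unit vector in the kernel of `T`
  obtain ⟨x₀, hx₀1, hx₀0⟩ : ∃ x : H, ‖x‖ = 1 ∧ T x = 0 := by
    by_contra h
    push_neg at h
    have hinj : Function.Injective T := by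
      intro a b hab
      by_contra hne
      have hz : a - b ≠ 0 := sub_ne_zero.mpr hne
      have hTz : T (a - b) = 0 := by rw [map_sub, hab, sub_self]
      have h1 : ‖(‖a - b‖⁻¹ • (a - b))‖ = 1 := by
        rw [norm_smul, norm_inv, norm_norm, inv_mul_cancel₀ (norm_ne_zero_iff.mpr hz)]
      exact h _ h1 (by rw [map_smul_of_tower, hTz, smul_zero])
    exact hninv (ContinuousLinearMap.isUnit_iff_bijective.mpr ⟨hinj, hTsurj⟩)
  set m := minMod (ContinuousLinearMap.adjoint T) with hmdef
  have hbdd : BddBelow {r : ℝ | ∃ x : H, ‖x‖ = 1 ∧ ‖ContinuousLinearMap.adjoint T x‖ = r} :=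
    ⟨0, by rintro r ⟨x, -, rfl⟩; exact norm_nonneg _⟩
  have hm_le : ∀ x : H, ‖x‖ = 1 → m ≤ ‖ContinuousLinearMap.adjoint T x‖ := fun x hx =>
    csInf_le hbdd ⟨x, hx, rfl⟩
  have hm_le' : ∀ y : H, m * ‖y‖ ≤ ‖ContinuousLinearMap.adjoint T y‖ := by
    intro y
    rcases eq_or_ne y 0 with rfl | hy
    · simp
    · have hyn : 0 < ‖y‖ := norm_pos_iff.mpr hy
      have h1 : ‖(‖y‖⁻¹ • y)‖ = 1 := by
        rw [norm_smul, norm_inv, norm_norm, inv_mul_cancel₀ hyn.ne']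
      have h2 := hm_le _ h1
      rw [map_smul_of_tower, norm_smul, norm_inv, norm_norm] at h2
      calc m * ‖y‖ ≤ ‖y‖⁻¹ * ‖ContinuousLinearMap.adjoint T y‖ * ‖y‖ := by
            exact mul_le_mul_of_nonneg_right h2 hyn.le
        _ = ‖ContinuousLinearMap.adjoint T y‖ := by field_simp
  -- positivity of m
  have hSpos : 0 < ‖S‖ := by
    rw [norm_pos_iff]
    intro h0
    obtain ⟨x, hx⟩ := exists_ne (0 : H)
    have := congrArg (fun f : H →L[ℂ] H => f x) hS
    rw [h0] at this
    simp [comp_apply] at this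
    exact hx this.symm
  have hS' : ContinuousLinearMap.adjoint S ∘L ContinuousLinearMap.adjoint T = 1 := by
    rw [← ContinuousLinearMap.adjoint_comp, hS, ContinuousLinearMap.one_def,
      ContinuousLinearMap.adjoint_id]
  have hmpos : 0 < m := by
    have hlb : ∀ r ∈ {r : ℝ | ∃ x : H, ‖x‖ = 1 ∧ ‖ContinuousLinearMap.adjoint T x‖ = r},
        ‖S‖⁻¹ ≤ r := by
      rintro r ⟨x, hx1, rfl⟩
      have h2 : ContinuousLinearMap.adjoint S (ContinuousLinearMap.adjoint T x) = x := by
        simpa [comp_apply] using congrArg (fun f : H →L[ℂ] H => f x) hS'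
      have h3 : ‖x‖ ≤ ‖ContinuousLinearMap.adjoint S‖ * ‖ContinuousLinearMap.adjoint T x‖ := by
        nth_rewrite 1 [← h2]; exact le_opNorm _ _
      rw [hx1, LinearIsometryEquiv.norm_map] at h3
      rw [inv_eq_one_div, div_le_iff₀ hSpos]
      linarith
    have : ‖S‖⁻¹ ≤ m := le_csInf ⟨‖ContinuousLinearMap.adjoint T x₀‖, x₀, hx₀1, rfl⟩ hlb
    exact lt_of_lt_of_le (inv_pos.mpr hSpos) this
  refine ⟨hmpos, ?_, ?_⟩
  · -- `m ≤ distCV T`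
    set G := T ∘L ContinuousLinearMap.adjoint T with hGdef
    have hre : ∀ z : H, ‖ContinuousLinearMap.adjoint T z‖ ^ 2 = RCLike.re ⟪G z, z⟫ := by
      intro z
      have h := ContinuousLinearMap.apply_norm_sq_eq_inner_adjoint_left
        (ContinuousLinearMap.adjoint T) z
      rwa [ContinuousLinearMap.adjoint_adjoint] at h
    have hGlow : ∀ y : H, m ^ 2 * ‖y‖ ≤ ‖G y‖ := by
      intro y
      rcases eq_or_ne y 0 with rfl | hy
      · simp
      · have hyn : 0 < ‖y‖ := norm_pos_iff.mpr hy
        have h1 : (m * ‖y‖) ^ 2 ≤ ‖ContinuousLinearMap.adjoint T y‖ ^ 2 :=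
          pow_le_pow_left₀ (by positivity) (hm_le' y) 2
        have h2 := hre y
        have h3 : RCLike.re ⟪G y, y⟫ ≤ ‖G y‖ * ‖y‖ := re_inner_le_norm _ _
        nlinarith [norm_nonneg (G y)]
    have hm2 : (0:ℝ) < m ^ 2 := pow_pos hmpos 2
    have hGinj : Function.Injective G := by
      intro a b hab
      have hz : G (a - b) = 0 := by rw [map_sub, hab, sub_self]
      have h := hGlow (a - b)
      rw [hz, norm_zero] at h
      have : ‖a - b‖ = 0 := by nlinarith [norm_nonneg (a - b)]
      exact sub_eq_zero.mp (norm_eq_zero.mp this)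
    have hGanti : AntilipschitzWith ⟨(m ^ 2)⁻¹, by positivity⟩ G := by
      refine ContinuousLinearMap.antilipschitz_of_bound G fun y => ?_
      have h := hGlow y
      calc ‖y‖ = (m ^ 2)⁻¹ * (m ^ 2 * ‖y‖) := by field_simp
        _ ≤ (m ^ 2)⁻¹ * ‖G y‖ := mul_le_mul_of_nonneg_left h (by positivity)
    have hGclosed := ContinuousLinearMap.closed_range_of_antilipschitz hGanti
    have hGdense : (LinearMap.range (G : H →ₗ[ℂ] H)).topologicalClosure = ⊤ := by
      rw [Submodule.topologicalClosure_eq_top_iff, Submodule.eq_bot_iff]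
      intro z hz
      have h0 : ⟪G z, z⟫ = 0 := hz (G z) ⟨z, rfl⟩
      have h1 : ‖ContinuousLinearMap.adjoint T z‖ ^ 2 = 0 := by
        rw [hre z, h0]; simp
      have h1' : ‖ContinuousLinearMap.adjoint T z‖ = 0 :=
        pow_eq_zero_iff two_ne_zero |>.mp h1
      have h2 := hm_le' z
      rw [h1'] at h2
      have : ‖z‖ = 0 := by nlinarith [norm_nonneg z]
      exact norm_eq_zero.mp this
    have hGsurj : LinearMap.range (G : H →ₗ[ℂ] H) = ⊤ := by rw [← hGclosed]; exact hGdense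
    have hGunit : IsUnit G := ContinuousLinearMap.isUnit_iff_bijective.mpr
      ⟨hGinj, LinearMap.range_eq_top.mp hGsurj⟩
    obtain ⟨u, hu⟩ := hGunit
    set Ginv := (↑u⁻¹ : H →L[ℂ] H) with hGinvdef
    have hGG : ∀ y, G (Ginv y) = y := by
      intro y
      have h1 : (↑u * ↑u⁻¹ : H →L[ℂ] H) = 1 := u.mul_inv
      rw [hu] at h1
      simpa [ContinuousLinearMap.mul_apply] using congrArg (fun f : H →L[ℂ] H => f y) h1
    have hGinvle : ∀ y, ‖Ginv y‖ ≤ (m ^ 2)⁻¹ * ‖y‖ := by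
      intro y
      have h1 := hGlow (Ginv y)
      rw [hGG y] at h1
      calc ‖Ginv y‖ = (m ^ 2)⁻¹ * (m ^ 2 * ‖Ginv y‖) := by field_simp
        _ ≤ (m ^ 2)⁻¹ * ‖y‖ := mul_le_mul_of_nonneg_left h1 (by positivity)
    set R := ContinuousLinearMap.adjoint T ∘L Ginv with hRdef
    have hTR : ∀ y, T (R y) = y := by
      intro y
      rw [hRdef, ContinuousLinearMap.comp_apply, ← ContinuousLinearMap.comp_apply T, ← hGdef]
      exact hGG y
    have hRle : ∀ y, ‖R y‖ ≤ m⁻¹ * ‖y‖ := by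
      intro y
      have h1 : ‖R y‖ ^ 2 = RCLike.re ⟪G (Ginv y), Ginv y⟫ := by
        rw [hRdef, ContinuousLinearMap.comp_apply]; exact hre (Ginv y)
      rw [hGG y] at h1
      have h2 : RCLike.re ⟪y, Ginv y⟫ ≤ ‖y‖ * ‖Ginv y‖ := re_inner_le_norm _ _
      have h3 : ‖R y‖ ^ 2 ≤ (m⁻¹ * ‖y‖) ^ 2 := by
        rw [h1]
        have h4 := hGinvle y
        have h5 : ‖y‖ * ‖Ginv y‖ ≤ (m ^ 2)⁻¹ * ‖y‖ ^ 2 := by nlinarith [norm_nonneg y]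
        have h6 : ((m:ℝ) ^ 2)⁻¹ * ‖y‖ ^ 2 = (m⁻¹ * ‖y‖) ^ 2 := by rw [mul_pow, ← inv_pow]
        linarith
      exact le_of_pow_le_pow_left₀ two_ne_zero (by positivity) h3
    have hRorth : ∀ y, ⟪x₀, R y⟫ = 0 := by
      intro y
      rw [hRdef, ContinuousLinearMap.comp_apply, ContinuousLinearMap.adjoint_inner_right, hx₀0,
        inner_zero_left]
    have key : ∀ W ∈ scalarIsoms H, m ≤ dist T W := by
      rintro W ⟨c, V, hV, rfl⟩
      rw [dist_eq_norm]
      have hVV : ContinuousLinearMap.adjoint V ∘L V = 1 :=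
        (ContinuousLinearMap.norm_map_iff_adjoint_comp_self V).mp hV
      have hVVy : ∀ y, ContinuousLinearMap.adjoint V (V y) = y := fun y => by
        simpa [ContinuousLinearMap.comp_apply] using congrArg (fun f : H →L[ℂ] H => f y) hVV
      set A := ContinuousLinearMap.adjoint V ∘L T with hAdef
      set RA := R ∘L V with hRAdef
      have hARA : ∀ y, A (RA y) = y := fun y => by
        simp only [hAdef, hRAdef, ContinuousLinearMap.comp_apply, hTR, hVVy]
      have hA0 : A x₀ = 0 := by
        simp [hAdef, ContinuousLinearMap.comp_apply, hx₀0]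
      have hRAle : ∀ y, ‖RA y‖ ≤ m⁻¹ * ‖y‖ := fun y => by
        simpa [hRAdef, ContinuousLinearMap.comp_apply, hV y] using hRle (V y)
      have hRAorth : ∀ y, ⟪x₀, RA y⟫ = 0 := fun y => hRorth (V y)
      have heig : ∀ l : ℂ, ‖l‖ < m → ‖l - c‖ ≤ ‖A - c • (1 : H →L[ℂ] H)‖ := by
        intro l hl
        obtain ⟨x, hx0, hx⟩ :=
          exists_eigenvector A RA x₀ m hmpos hARA hA0 hx₀1 hRAorth hRAle l hl
        have h1 : (A - c • (1 : H →L[ℂ] H)) x = (l - c) • x := by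
          rw [ContinuousLinearMap.sub_apply, ContinuousLinearMap.smul_apply,
            ContinuousLinearMap.one_apply, hx, sub_smul]
        have h2 := le_opNorm (A - c • (1 : H →L[ℂ] H)) x
        rw [h1, norm_smul] at h2
        have hxn : 0 < ‖x‖ := norm_pos_iff.mpr hx0
        exact le_of_mul_le_mul_right h2 hxn
      have hVadle : ‖ContinuousLinearMap.adjoint V‖ ≤ 1 := by
        rw [LinearIsometryEquiv.norm_map]
        exact ContinuousLinearMap.opNorm_le_bound V zero_le_one fun x => by rw [hV x, one_mul]
      have hcomp : ‖A - c • (1 : H →L[ℂ] H)‖ ≤ ‖T - c • V‖ := by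
        have hfac : A - c • (1 : H →L[ℂ] H) = ContinuousLinearMap.adjoint V ∘L (T - c • V) := by
          ext y
          simp only [hAdef, ContinuousLinearMap.comp_apply, ContinuousLinearMap.sub_apply,
            ContinuousLinearMap.smul_apply, ContinuousLinearMap.one_apply, map_sub, map_smul,
            hVVy y]
        rw [hfac]
        calc ‖ContinuousLinearMap.adjoint V ∘L (T - c • V)‖
            ≤ ‖ContinuousLinearMap.adjoint V‖ * ‖T - c • V‖ :=
              ContinuousLinearMap.opNorm_comp_le _ _
          _ ≤ 1 * ‖T - c • V‖ := mul_le_mul_of_nonneg_right hVadle (norm_nonneg _)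
          _ = ‖T - c • V‖ := one_mul _
      refine le_of_forall_sub_le fun ε hε => ?_
      rcases le_or_gt m ε with hme | hme
      · have := norm_nonneg (T - c • V); linarith
      · set r := m - ε with hr
        have hrpos : 0 < r := by rw [hr]; linarith
        have hrm : r < m := by rw [hr]; linarith
        obtain ⟨l, hlm, hlc⟩ : ∃ l : ℂ, ‖l‖ < m ∧ r ≤ ‖l - c‖ := by
          rcases eq_or_ne c 0 with rfl | hc
          · refine ⟨(r : ℂ), ?_, ?_⟩
            · rwa [Complex.norm_real, Real.norm_eq_abs, abs_of_pos hrpos]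
            · rw [sub_zero, Complex.norm_real, Real.norm_eq_abs, abs_of_pos hrpos]
          · have hcn : 0 < ‖c‖ := norm_pos_iff.mpr hc
            refine ⟨(↑(-(r / ‖c‖)) : ℂ) * c, ?_, ?_⟩
            · rw [norm_mul, Complex.norm_real, Real.norm_eq_abs, abs_neg,
                abs_of_pos (div_pos hrpos hcn), div_mul_cancel₀ _ hcn.ne']
              exact hrm
            · have h4 : (↑(-(r / ‖c‖)) : ℂ) * c - c = (↑(-(r / ‖c‖) - 1) : ℂ) * c := by
                push_cast; ring
              rw [h4, norm_mul, Complex.norm_real, Real.norm_eq_abs]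
              have hq : 0 < r / ‖c‖ := div_pos hrpos hcn
              have h5 : |(-(r / ‖c‖) - 1)| = r / ‖c‖ + 1 := by
                rw [abs_of_nonpos (by linarith)]; ring
              rw [h5]
              have h6 : (r / ‖c‖ + 1) * ‖c‖ = r + ‖c‖ := by
                rw [add_mul, div_mul_cancel₀ _ hcn.ne', one_mul]
              rw [h6]; linarith
        have := heig l hlm
        have := hcomp
        calc m - ε = r := rfl
          _ ≤ ‖l - c‖ := hlc
          _ ≤ ‖A - c • (1 : H →L[ℂ] H)‖ := heig l hlm
          _ ≤ ‖T - c • V‖ := hcomp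
    have hne : Nonempty (scalarIsoms H) :=
      ⟨⟨0, 0, 1, fun x => by rw [ContinuousLinearMap.one_apply], by rw [zero_smul]⟩⟩
    show m ≤ Metric.infDist T (scalarIsoms H)
    rw [Metric.infDist_eq_iInf]
    exact le_ciInf fun w => key w w.2
  · -- distCV T ≤ ‖T‖
    have h0 : (0 : H →L[ℂ] H) ∈ scalarIsoms H :=
      ⟨0, 1, fun x => by rw [ContinuousLinearMap.one_apply], by rw [zero_smul]⟩
    calc distCV T ≤ dist T 0 := Metric.infDist_le_dist_of_mem h0
      _ = ‖T‖ := by rw [dist_zero_right]
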